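/- Let H and E be real inner product spaces, ε : H → E a linear map, k > 0, β ∈ ℝ, and j ≥ 2 an integer. Let u⁰, …, u^j ∈ H and p⁰, …, p^j ∈ E be such that for each i = 1, …, j−1 and every ψ ∈ H one has ⟪(u^{i+1} − 2u^i + u^{i−1})/k², ψ⟫ + β⟪ε u^{i+1}, ε ψ⟫ = −(1 − 2β)⟪ε u^i − p^i, ε ψ⟫ − β⟪ε u^{i−1} − p^{i−1}, ε ψ⟫ + β⟪p^{i+1}, ε ψ⟫. Then, writing ∂ₜx^i := (x^i − x^{i−1})/k, one has the summed identity ‖∂ₜu^j‖² − ‖∂ₜu¹‖² + β k² ‖ε ∂ₜu^j‖² − β k² ‖ε ∂ₜu¹‖² + ⟪ε u^j, ε u^{j−1}⟫ − ⟪ε u¹, ε u⁰⟫ = β k² ⟪∂ₜp^j, ε ∂ₜu^j⟫ − β k² ⟪∂ₜp¹, ε ∂ₜu¹⟫ + β k² Σ_{i=1}^{j−1} ⟪∂ₜp^{i+1}, ε ∂ₜu^i⟫ − β k² Σ_{i=1}^{j−1} ⟪∂ₜp^i, ε ∂ₜu^{i+1}⟫ + k Σ_{i=1}^{j−1} ⟪p^i,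 ε ∂ₜu^{i+1} + ε ∂ₜu^i⟫. -/

import Mathlib

open RealInnerProductSpace

lemma my_step
    {H E : Type*}
    [NormedAddCommGroup H] [InnerProductSpace ℝ H]
    [NormedAddCommGroup E] [InnerProductSpace ℝ E]
    (ε : H →ₗ[ℝ] E) (k β : ℝ) (hk : k ≠ 0)
    (a b c : H) (q0 q1 q2 : E)
    (h : ⟪(k ^ 2)⁻¹ • (c - (2 : ℝ) • b + a), c - a⟫ + β * ⟪ε c, ε (c - a)⟫
        = -(1 - 2 * β) * ⟪ε b - q1, ε (c - a)⟫ - β * ⟪ε a - q0, ε (c - a)⟫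
          + β * ⟪q2, ε (c - a)⟫) :
    (‖k⁻¹ • (c - b)‖ ^ 2 + β * k ^ 2 * ‖ε (k⁻¹ • (c - b))‖ ^ 2 + ⟪ε c, ε b⟫)
      - (‖k⁻¹ • (b - a)‖ ^ 2 + β * k ^ 2 * ‖ε (k⁻¹ • (b - a))‖ ^ 2 + ⟪ε b, ε a⟫)
    = (β * k ^ 2 * ⟪k⁻¹ • (q2 - q1), ε (k⁻¹ • (c - b))⟫)
      - (β * k ^ 2 * ⟪k⁻¹ • (q1 - q0), ε (k⁻¹ • (b - a))⟫)
      + (β * k ^ 2 * ⟪k⁻¹ • (q2 - q1), ε (k⁻¹ • (b - a))⟫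
        - β * k ^ 2 * ⟪k⁻¹ • (q1 - q0), ε (k⁻¹ • (c - b))⟫
        + k * ⟪q1, ε (k⁻¹ • (c - b)) + ε (k⁻¹ • (b - a))⟫) := by
  have hkk : k * k⁻¹ = 1 := mul_inv_cancel₀ hk
  simp only [← real_inner_self_eq_norm_sq, map_sub, map_add, map_smul, inner_sub_left,
    inner_sub_right, inner_add_left, inner_add_right, real_inner_smul_left,
    real_inner_smul_right, smul_sub] at h ⊢
  simp only [real_inner_comm c a, real_inner_comm c b, real_inner_comm b a,
    real_inner_comm (ε c) (ε a), real_inner_comm (ε c) (ε b),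
    real_inner_comm (ε b) (ε a)] at h ⊢
  linear_combination h + ((1 + k * k⁻¹) * β *
      (⟪q2, ε a⟫ - ⟪q2, ε c⟫ + ⟪q0, ε a⟫ - ⟪q0, ε c⟫ - 2 * ⟪q1, ε a⟫ + 2 * ⟪q1, ε c⟫
        - ⟪ε a, ε a⟫ + 2 * ⟪ε b, ε a⟫ - 2 * ⟪ε c, ε b⟫ + ⟪ε c, ε c⟫)
      + (⟪q1, ε a⟫ - ⟪q1, ε c⟫)) * hkk

theorem stmt_9
    {H E : Type*}
    [NormedAddCommGroup H] [InnerProductSpace ℝ H]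
    [NormedAddCommGroup E] [InnerProductSpace ℝ E]
    (ε : H →ₗ[ℝ] E)
    (k β : ℝ) (hk : 0 < k)
    (j : ℕ) (hj : 2 ≤ j)
    (u : ℕ → H) (p : ℕ → E)
    (heq : ∀ i, 1 ≤ i → i ≤ j - 1 → ∀ ψ : H,
      ⟪(k ^ 2)⁻¹ • (u (i + 1) - (2 : ℝ) • u i + u (i - 1)), ψ⟫
          + β * ⟪ε (u (i + 1)), ε ψ⟫
        = -(1 - 2 * β) * ⟪ε (u i) - p i, ε ψ⟫
          - β * ⟪ε (u (i - 1)) - p (i - 1), ε ψ⟫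
          + β * ⟪p (i + 1), ε ψ⟫) :
    ‖k⁻¹ • (u j - u (j - 1))‖ ^ 2 - ‖k⁻¹ • (u 1 - u 0)‖ ^ 2
        + β * k ^ 2 * ‖ε (k⁻¹ • (u j - u (j - 1)))‖ ^ 2
        - β * k ^ 2 * ‖ε (k⁻¹ • (u 1 - u 0))‖ ^ 2
        + ⟪ε (u j), ε (u (j - 1))⟫ - ⟪ε (u 1), ε (u 0)⟫
      = β * k ^ 2 * ⟪k⁻¹ • (p j - p (j - 1)), ε (k⁻¹ • (u j - u (j - 1)))⟫
        - β * k ^ 2 * ⟪k⁻¹ • (p 1 - p 0), ε (k⁻¹ • (u 1 - u 0))⟫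
        + β * k ^ 2 * ∑ i ∈ Finset.Icc 1 (j - 1),
            ⟪k⁻¹ • (p (i + 1) - p i), ε (k⁻¹ • (u i - u (i - 1)))⟫
        - β * k ^ 2 * ∑ i ∈ Finset.Icc 1 (j - 1),
            ⟪k⁻¹ • (p i - p (i - 1)), ε (k⁻¹ • (u (i + 1) - u i))⟫
        + k * ∑ i ∈ Finset.Icc 1 (j - 1),
            ⟪p i, ε (k⁻¹ • (u (i + 1) - u i)) + ε (k⁻¹ • (u i - u (i - 1)))⟫ := by
  have hk0 : k ≠ 0 := ne_of_gt hk
  obtain ⟨Du, hDu⟩ : ∃ f : ℕ → ℝ, ∀ n, f n =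
      ‖k⁻¹ • (u n - u (n - 1))‖ ^ 2 + β * k ^ 2 * ‖ε (k⁻¹ • (u n - u (n - 1)))‖ ^ 2
        + ⟪ε (u n), ε (u (n - 1))⟫ := ⟨_, fun n => rfl⟩
  obtain ⟨Dp, hDp⟩ : ∃ f : ℕ → ℝ, ∀ n, f n =
      β * k ^ 2 * ⟪k⁻¹ • (p n - p (n - 1)), ε (k⁻¹ • (u n - u (n - 1)))⟫ := ⟨_, fun n => rfl⟩
  obtain ⟨S, hS⟩ : ∃ f : ℕ → ℝ, ∀ n, f n =
      β * k ^ 2 * ⟪k⁻¹ • (p (n + 1) - p n), ε (k⁻¹ • (u n - u (n - 1)))⟫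
        - β * k ^ 2 * ⟪k⁻¹ • (p n - p (n - 1)), ε (k⁻¹ • (u (n + 1) - u n))⟫
        + k * ⟪p n, ε (k⁻¹ • (u (n + 1) - u n)) + ε (k⁻¹ • (u n - u (n - 1)))⟫ :=
    ⟨_, fun n => rfl⟩
  have htel : ∀ f : ℕ → ℝ, ∑ i ∈ Finset.Icc 1 (j - 1), (f (i + 1) - f i) = f j - f 1 := by
    intro f
    have e0 : Finset.Icc 1 (j - 1) = Finset.Ico 1 j := by
      rw [← Finset.Ico_add_one_right_eq_Icc]; congr 1; omega
    rw [e0, Finset.sum_Ico_eq_sum_range]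
    have e1 : j - 1 = j - 1 := rfl
    have e2 := Finset.sum_range_sub (fun n => f (1 + n)) (j - 1)
    have e3 : ∑ i ∈ Finset.range (j - 1), (f (1 + i + 1) - f (1 + i))
        = ∑ i ∈ Finset.range (j - 1), (f (1 + (i + 1)) - f (1 + i)) := by
      refine Finset.sum_congr rfl fun i _ => by rw [Nat.add_assoc]
    rw [e3, e2]
    have e4 : 1 + (j - 1) = j := by omega
    rw [e4, Nat.add_zero]
  have key : ∀ i ∈ Finset.Icc 1 (j - 1), Du (i + 1) - Du i = Dp (i + 1) - Dp i + S i := by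
    intro i hi
    simp only [Finset.mem_Icc] at hi
    rw [hDu, hDu, hDp, hDp, hS]
    simp only [Nat.add_sub_cancel]
    exact my_step ε k β hk0 (u (i - 1)) (u i) (u (i + 1)) (p (i - 1)) (p i) (p (i + 1))
      (heq i hi.1 hi.2 (u (i + 1) - u (i - 1)))
  have h4 : Du j - Du 1 = Dp j - Dp 1 + ∑ i ∈ Finset.Icc 1 (j - 1), S i := by
    rw [← htel Du, Finset.sum_congr rfl key, Finset.sum_add_distrib, htel Dp]
  have h5 : ∑ i ∈ Finset.Icc 1 (j - 1), S i
      = β * k ^ 2 * ∑ i ∈ Finset.Icc 1 (j - 1),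
            ⟪k⁻¹ • (p (i + 1) - p i), ε (k⁻¹ • (u i - u (i - 1)))⟫
        - β * k ^ 2 * ∑ i ∈ Finset.Icc 1 (j - 1),
            ⟪k⁻¹ • (p i - p (i - 1)), ε (k⁻¹ • (u (i + 1) - u i))⟫
        + k * ∑ i ∈ Finset.Icc 1 (j - 1),
            ⟪p i, ε (k⁻¹ • (u (i + 1) - u i)) + ε (k⁻¹ • (u i - u (i - 1)))⟫ := by
    simp only [hS]
    rw [Finset.sum_add_distrib, Finset.sum_sub_distrib, Finset.mul_sum, Finset.mul_sum,
      Finset.mul_sum]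
  rw [h5, hDu j, hDu 1, hDp j, hDp 1] at h4
  simp only [Nat.sub_self] at h4
  linear_combination h4
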